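/- Let n ≥ 1 and let M be an n×n complex matrix whose spectrum is contained in the open unit disk (so that 1 − conj(α)•M is invertible for |α| ≤ 1). Assume that for every α ∈ ℂ with |α| < 1, ‖(M − α•1) * (1 − conj(α)•M)⁻¹‖ ≤ ‖M‖, and assume ‖M‖ > 1, where ‖·‖ is the ℓ² operator norm. Then for every unit vector v ∈ EuclideanSpace ℂ (Fin n) with ‖M v‖ = ‖M‖, one has ⟪M v, v⟫ = 0. -/

import Mathlib

open Matrix Complex

noncomputable def l2opNorm {n : ℕ} (M : Matrix (Fin n) (Fin n) ℂ) : ℝ :=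
  ‖(Matrix.toEuclideanCLM (𝕜 := ℂ) M : EuclideanSpace ℂ (Fin n) →L[ℂ] EuclideanSpace ℂ (Fin n))‖


set_option maxHeartbeats 1000000

theorem moebius_maximal_implies_orthogonal
    {n : ℕ} (hn : 1 ≤ n) (M : Matrix (Fin n) (Fin n) ℂ)
    (hspec : spectrum ℂ M ⊆ Metric.ball 0 1)
    (hmax : ∀ α : ℂ, ‖α‖ < 1 →
      l2opNorm ((M - α • (1 : Matrix (Fin n) (Fin n) ℂ)) *
        ((1 : Matrix (Fin n) (Fin n) ℂ) - (starRingEnd ℂ) α • M)⁻¹) ≤ l2opNorm M)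
    (hnorm : 1 < l2opNorm M) :
    ∀ v : EuclideanSpace ℂ (Fin n), ‖v‖ = 1 →
      ‖(Matrix.toEuclideanCLM (𝕜 := ℂ) M) v‖ = l2opNorm M →
      (inner ℂ ((Matrix.toEuclideanCLM (𝕜 := ℂ) M) v) v : ℂ) = 0 := by
  intro v hv hMv
  set T := Matrix.toEuclideanCLM (𝕜 := ℂ) M with hT
  set m := l2opNorm M with hm
  set c : ℂ := inner ℂ (T v) v with hc
  -- invertibility of 1 - conj α • M
  have hinv : ∀ α : ℂ, ‖α‖ < 1 →
      IsUnit ((1 : Matrix (Fin n) (Fin n) ℂ) - (starRingEnd ℂ) α • M) := by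
    intro α hα
    set β := (starRingEnd ℂ) α with hβ
    by_cases hβ0 : β = 0
    · simp [hβ0]
    · have hβabs : ‖β‖ < 1 := by
        simpa [hβ, Complex.norm_conj] using hα
      have hβinv : (β⁻¹ : ℂ) ∉ spectrum ℂ M := by
        intro hmem
        have := hspec hmem
        rw [Metric.mem_ball, dist_zero_right, norm_inv] at this
        have h1 : 0 < ‖β‖ := norm_pos_iff.mpr hβ0
        have : (1:ℝ) < ‖β‖ := by
          rw [inv_lt_one_iff₀] at this
          rcases this with h | h
          · linarith
          · exact h
        linarith
      have hU : IsUnit ((β⁻¹ : ℂ) • (1 : Matrix (Fin n) (Fin n) ℂ) - M) := by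
        rw [← Algebra.algebraMap_eq_smul_one]
        exact spectrum.notMem_iff.mp hβinv
      have key : (1 : Matrix (Fin n) (Fin n) ℂ) - β • M
          = β • ((β⁻¹ : ℂ) • (1 : Matrix (Fin n) (Fin n) ℂ) - M) := by
        rw [smul_sub, smul_smul, mul_inv_cancel₀ hβ0, one_smul]
      rw [key, Matrix.isUnit_iff_isUnit_det, Matrix.det_smul]
      exact ((isUnit_iff_ne_zero.mpr hβ0).pow _).mul
        ((Matrix.isUnit_iff_isUnit_det _).mp hU)
  -- key inequality
  have hkey : ∀ α : ℂ, ‖α‖ < 1 →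
      ‖T v - α • v‖ ≤ m * ‖v - (starRingEnd ℂ) α • T v‖ := by
    intro α hα
    have hU := hinv α hα
    have hUdet := (Matrix.isUnit_iff_isUnit_det _).mp hU
    have hAB : ((M - α • (1 : Matrix (Fin n) (Fin n) ℂ)) *
        ((1 : Matrix (Fin n) (Fin n) ℂ) - (starRingEnd ℂ) α • M)⁻¹) *
        ((1 : Matrix (Fin n) (Fin n) ℂ) - (starRingEnd ℂ) α • M)
        = M - α • (1 : Matrix (Fin n) (Fin n) ℂ) := by
      rw [Matrix.mul_assoc, Matrix.nonsing_inv_mul _ hUdet, Matrix.mul_one]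
    set A := Matrix.toEuclideanCLM (𝕜 := ℂ) ((M - α • (1 : Matrix (Fin n) (Fin n) ℂ)) *
        ((1 : Matrix (Fin n) (Fin n) ℂ) - (starRingEnd ℂ) α • M)⁻¹) with hA
    have h1 : A (v - (starRingEnd ℂ) α • T v) = T v - α • v := by
      have e1 : v - (starRingEnd ℂ) α • T v
          = Matrix.toEuclideanCLM (𝕜 := ℂ)
            ((1 : Matrix (Fin n) (Fin n) ℂ) - (starRingEnd ℂ) α • M) v := by
        simp [hT, map_sub, _root_.map_smul]
      rw [e1, hA, ← ContinuousLinearMap.comp_apply, ← ContinuousLinearMap.mul_def,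
        ← _root_.map_mul, hAB]
      simp [hT, map_sub, _root_.map_smul]
    calc ‖T v - α • v‖ = ‖A (v - (starRingEnd ℂ) α • T v)‖ := by rw [h1]
      _ ≤ ‖A‖ * ‖v - (starRingEnd ℂ) α • T v‖ := A.le_opNorm _
      _ ≤ m * ‖v - (starRingEnd ℂ) α • T v‖ :=
          mul_le_mul_of_nonneg_right (hmax α hα) (norm_nonneg _)
  -- squared inequality
  have hsq : ∀ α : ℂ, ‖α‖ < 1 →
      2 * (m^2 - 1) * Complex.re (α * c) ≤ ‖α‖^2 * (m^4 - 1) := by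
    intro α hα
    have h := hkey α hα
    have hmpos : (0:ℝ) < m := lt_trans one_pos hnorm
    have hL : ‖T v - α • v‖^2 = m^2 - 2 * Complex.re (α * c) + ‖α‖^2 := by
      rw [@norm_sub_sq ℂ, inner_smul_right, ← hc, hMv, norm_smul, hv]
      simp [RCLike.re_to_complex]
    have hR : ‖v - (starRingEnd ℂ) α • T v‖^2
        = 1 - 2 * Complex.re (α * c) + ‖α‖^2 * m^2 := by
      rw [@norm_sub_sq ℂ, inner_smul_right, ← inner_conj_symm, ← hc, norm_smul, hMv, hv]
      rw [← _root_.map_mul]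
      simp [RCLike.re_to_complex, Complex.norm_conj, mul_pow]
    have hsq' : ‖T v - α • v‖^2 ≤ m^2 * ‖v - (starRingEnd ℂ) α • T v‖^2 := by
      have := mul_self_le_mul_self (norm_nonneg _) h
      nlinarith [norm_nonneg (T v - α • v), norm_nonneg (v - (starRingEnd ℂ) α • T v)]
    rw [hL, hR] at hsq'
    nlinarith
  -- conclude
  by_contra hc0
  have hcabs : 0 < ‖c‖ := by simpa using hc0
  set t : ℝ := min ((2 * ‖c‖)⁻¹) ((m^2+1)⁻¹) with ht
  have hmpos : (0:ℝ) < m := lt_trans one_pos hnorm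
  have htpos : 0 < t := lt_min (by positivity) (by positivity)
  set α : ℂ := (t : ℂ) * (starRingEnd ℂ) c with hα
  have hαabs : ‖α‖ = t * ‖c‖ := by
    simp [hα, Complex.norm_real, Real.norm_eq_abs, abs_of_pos htpos]
  have hαlt : ‖α‖ < 1 := by
    rw [hαabs]
    have : t ≤ (2 * ‖c‖)⁻¹ := min_le_left _ _
    calc t * ‖c‖ ≤ (2 * ‖c‖)⁻¹ * ‖c‖ :=
          mul_le_mul_of_nonneg_right this (le_of_lt hcabs)
      _ = 1/2 := by field_simp
      _ < 1 := by norm_num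
  have hcc : (starRingEnd ℂ) c * c = ((‖c‖ ^ 2 : ℝ) : ℂ) := by
    rw [mul_comm, Complex.mul_conj]
    norm_cast
    rw [Complex.sq_norm]
  have hre : Complex.re (α * c) = t * (‖c‖)^2 := by
    rw [hα, mul_assoc, hcc, ← Complex.ofReal_mul, Complex.ofReal_re]
  have h := hsq α hαlt
  rw [hre, hαabs] at h
  have htle : t ≤ (m^2+1)⁻¹ := min_le_right _ _
  have h2 : t * (m^2+1) ≤ 1 := by
    have hpos : (0:ℝ) < m^2+1 := by nlinarith
    calc t * (m^2+1) ≤ (m^2+1)⁻¹ * (m^2+1) := mul_le_mul_of_nonneg_right htle hpos.le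
      _ = 1 := inv_mul_cancel₀ hpos.ne'
  have hm1 : (0:ℝ) < m^2 - 1 := by nlinarith
  have hp : (0:ℝ) < t * ‖c‖ ^ 2 * (m^2 - 1) :=
    mul_pos (mul_pos htpos (pow_pos hcabs 2)) hm1
  nlinarith [mul_le_mul_of_nonneg_left h2 hp.le, h, hp, hm1]
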